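/- The map β ↦ β·m_β² is continuous and strictly increasing on (1,∞), tends to 0 as β↓1 and to +∞ as β→∞. Consequently, for every b>0 there exists a unique β̃(b)∈(1,∞) such that β̃(b)·m_{β̃(b)}² = b. -/

import Mathlib

open Filter Topology

noncomputable def atnh (x : ℝ) : ℝ := Real.log ((1 + x) / (1 - x)) / 2

lemma tanh_eq_exp (x : ℝ) : Real.tanh x = (Real.exp (2*x) - 1) / (Real.exp (2*x) + 1) := by
  rw [Real.tanh_eq_sinh_div_cosh, Real.sinh_eq, Real.cosh_eq]
  have h2 : Real.exp (2*x) = Real.exp x * Real.exp x := by rw [← Real.exp_add]; ring_nf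
  have h1 : Real.exp (-x) * Real.exp x = 1 := by rw [← Real.exp_add]; simp
  have hp := Real.exp_pos x
  have hq := Real.exp_pos (-x)
  rw [h2, div_div_div_eq, div_eq_div_iff (by positivity) (by positivity)]
  nlinarith [h1]

lemma my_tanh_lt_one (x : ℝ) : Real.tanh x < 1 := by
  rw [tanh_eq_exp]
  have := Real.exp_pos (2*x)
  rw [div_lt_one (by linarith)]; linarith

lemma my_tanh_strictMono : StrictMono Real.tanh := by
  intro x y hxy
  rw [tanh_eq_exp, tanh_eq_exp]
  have hu := Real.exp_pos (2*x)
  have hv := Real.exp_pos (2*y)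
  have huv : Real.exp (2*x) < Real.exp (2*y) := Real.exp_lt_exp.2 (by linarith)
  rw [div_lt_div_iff₀ (by linarith) (by linarith)]
  nlinarith

lemma my_tanh_pos {x : ℝ} (hx : 0 < x) : 0 < Real.tanh x := by
  have := my_tanh_strictMono hx
  simpa [Real.tanh_zero] using this

lemma ratio_tanh (x : ℝ) : (1 + Real.tanh x) / (1 - Real.tanh x) = Real.exp (2*x) := by
  rw [tanh_eq_exp]
  have hu := Real.exp_pos (2*x)
  rw [div_eq_iff]
  · field_simp; ring
  · rw [sub_ne_zero]
    intro h
    have := my_tanh_lt_one x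
    rw [tanh_eq_exp] at this
    rw [← h] at this
    exact lt_irrefl _ this

lemma atnh_tanh (x : ℝ) : atnh (Real.tanh x) = x := by
  rw [atnh, ratio_tanh, Real.log_exp]; ring

lemma hasDerivAt_atnh {x : ℝ} (hx : x ∈ Set.Ioo (-1:ℝ) 1) :
    HasDerivAt atnh (1 / (1 - x^2)) x := by
  obtain ⟨h1, h2⟩ := hx
  have hne : (1 - x) ≠ 0 := by intro h; rw [sub_eq_zero] at h; linarith
  have ha : HasDerivAt (fun y : ℝ => 1 + y) 1 x := by
    simpa using (hasDerivAt_id x).const_add (1:ℝ)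
  have hb : HasDerivAt (fun y : ℝ => 1 - y) (-1) x := by
    simpa using (hasDerivAt_id x).const_sub (1:ℝ)
  have hq : HasDerivAt (fun y : ℝ => (1+y)/(1-y)) (2/(1-x)^2) x := by
    have : HasDerivAt (fun y : ℝ => (1+y)/(1-y)) ((1 * (1 - x) - (1 + x) * -1) / (1 - x) ^ 2) x :=
      ha.div hb hne
    convert this using 1
    ring
  have hqpos : 0 < (1+x)/(1-x) := div_pos (by linarith) (by linarith)
  have hl := (Real.hasDerivAt_log (ne_of_gt hqpos)).comp x hq
  have hfin := hl.div_const 2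
  have hne2 : (1 + x) ≠ 0 := by intro h; nlinarith
  have hne3 : (1 - x^2) ≠ 0 := by intro h; nlinarith
  have heq : (1:ℝ) / (1 - x^2) = ((1+x)/(1-x))⁻¹ * (2/(1-x)^2) / 2 := by
    rw [inv_div]
    field_simp
    ring
  rw [heq]
  exact hfin

lemma atnh_zero : atnh 0 = 0 := by simp [atnh]

lemma atnh_strictConvex : StrictConvexOn ℝ (Set.Ico (0:ℝ) 1) atnh := by
  apply StrictMonoOn.strictConvexOn_of_deriv (convex_Ico 0 1)
  · intro x hx
    have : x ∈ Set.Ioo (-1:ℝ) 1 := ⟨by linarith [hx.1], hx.2⟩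
    exact (hasDerivAt_atnh this).continuousAt.continuousWithinAt
  · rw [interior_Ico]
    intro a ha b hb hab
    rw [(hasDerivAt_atnh ⟨by linarith [ha.1], ha.2⟩).deriv,
        (hasDerivAt_atnh ⟨by linarith [hb.1], hb.2⟩).deriv]
    obtain ⟨ha0, ha1⟩ := ha
    obtain ⟨hb0, hb1⟩ := hb
    rw [div_lt_div_iff₀ (by nlinarith) (by nlinarith)]
    nlinarith

lemma atnh_slope_lt {a b : ℝ} (ha : 0 < a) (hab : a < b) (hb : b < 1) :
    atnh a / a < atnh b / b := by
  have := atnh_strictConvex.secant_strict_mono (a := 0)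
    (Set.mem_Ico.2 ⟨le_refl 0, by norm_num⟩)
    (Set.mem_Ico.2 ⟨ha.le, by linarith⟩) (Set.mem_Ico.2 ⟨by linarith, hb⟩)
    (ne_of_gt ha) (ne_of_gt (ha.trans hab)) hab
  simpa [atnh_zero] using this

lemma lt_atnh {m : ℝ} (hm0 : 0 < m) (hm1 : m < 1) : m < atnh m := by
  obtain ⟨c, hc, hceq⟩ := exists_hasDerivAt_eq_slope atnh (fun x => 1/(1-x^2)) hm0
    (fun x hx => (hasDerivAt_atnh ⟨by linarith [hx.1], by linarith [hx.2]⟩).continuousAt.continuousWithinAt)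
    (fun x hx => hasDerivAt_atnh ⟨by linarith [hx.1], by linarith [hx.2]⟩)
  rw [atnh_zero, sub_zero, sub_zero] at hceq
  obtain ⟨hc0, hcm⟩ := hc
  have h1 : 1 < 1/(1-c^2) := by
    rw [lt_div_iff₀ (by nlinarith)]
    nlinarith
  rw [hceq, lt_div_iff₀ hm0] at h1
  linarith

/-- **Monotonicity of `β ↦ β mβ²`.** If `mB β` denotes, for `β > 1`, the unique positive
solution in `(0,1)` of `m = tanh (β m)`, then `β ↦ β * (mB β)^2` is continuous and strictly
increasing on `(1,∞)`, tends to `0` as `β ↓ 1`, tends to `+∞` as `β → ∞`, and consequently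
for every `b > 0` there is a unique `β ∈ (1,∞)` with `β * (mB β)^2 = b`. -/
theorem beta_m_sq_monotone
    (mB : ℝ → ℝ)
    (hmB : ∀ β : ℝ, 1 < β → mB β ∈ Set.Ioo (0 : ℝ) 1 ∧ mB β = Real.tanh (β * mB β)) :
    ContinuousOn (fun β : ℝ => β * (mB β) ^ 2) (Set.Ioi 1) ∧
    StrictMonoOn (fun β : ℝ => β * (mB β) ^ 2) (Set.Ioi 1) ∧
    Tendsto (fun β : ℝ => β * (mB β) ^ 2) (nhdsWithin 1 (Set.Ioi 1)) (nhds 0) ∧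
    Tendsto (fun β : ℝ => β * (mB β) ^ 2) atTop atTop ∧
    (∀ b : ℝ, 0 < b → ∃! β : ℝ, β ∈ Set.Ioi (1 : ℝ) ∧ β * (mB β) ^ 2 = b) := by
  set f : ℝ → ℝ := fun β => β * (mB β) ^ 2 with hf
  -- the key relation in terms of atnh
  have hrel : ∀ β : ℝ, 1 < β → atnh (mB β) = β * mB β := by
    intro β hβ
    conv_lhs => rw [(hmB β hβ).2]
    exact atnh_tanh _
  have hslope : ∀ β : ℝ, 1 < β → atnh (mB β) / mB β = β := by
    intro β hβ
    rw [hrel β hβ, mul_div_assoc, div_self (ne_of_gt (hmB β hβ).1.1), mul_one]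
  -- mB is determined by the relation
  have hdet : ∀ β m : ℝ, 1 < β → 0 < m → m < 1 → atnh m = β * m → mB β = m := by
    intro β m hβ hm0 hm1 hrm
    have hsm : atnh m / m = β := by
      rw [hrm, mul_div_assoc, div_self (ne_of_gt hm0), mul_one]
    obtain ⟨⟨h0, h1⟩, _⟩ := hmB β hβ
    rcases lt_trichotomy (mB β) m with h | h | h
    · have := atnh_slope_lt h0 h hm1
      rw [hslope β hβ, hsm] at this
      exact absurd this (lt_irrefl β)
    · exact h
    · have := atnh_slope_lt hm0 h h1
      rw [hslope β hβ, hsm] at this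
      exact absurd this (lt_irrefl β)
  -- mB strictly monotone
  have hmBmono : ∀ β1 β2 : ℝ, 1 < β1 → β1 < β2 → mB β1 < mB β2 := by
    intro β1 β2 h1 h12
    have h2 : 1 < β2 := h1.trans h12
    obtain ⟨⟨a0, a1⟩, _⟩ := hmB β1 h1
    obtain ⟨⟨b0, b1⟩, _⟩ := hmB β2 h2
    rcases lt_trichotomy (mB β1) (mB β2) with h | h | h
    · exact h
    · exfalso
      have := hslope β1 h1
      rw [h, hslope β2 h2] at this
      linarith
    · exfalso
      have := atnh_slope_lt b0 h a1
      rw [hslope β1 h1, hslope β2 h2] at this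
      linarith
  -- strict monotonicity of f
  have hsm : StrictMonoOn f (Set.Ioi 1) := by
    intro β1 hβ1 β2 hβ2 h12
    simp only [Set.mem_Ioi] at hβ1 hβ2
    obtain ⟨⟨a0, a1⟩, _⟩ := hmB β1 hβ1
    obtain ⟨⟨b0, b1⟩, _⟩ := hmB β2 hβ2
    have hm := hmBmono β1 β2 hβ1 h12
    show β1 * (mB β1)^2 < β2 * (mB β2)^2
    have hsq : (mB β1)^2 < (mB β2)^2 := by nlinarith
    calc β1 * (mB β1)^2 < β1 * (mB β2)^2 :=
          mul_lt_mul_of_pos_left hsq (by linarith)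
      _ < β2 * (mB β2)^2 := mul_lt_mul_of_pos_right h12 (by positivity)
  -- surjectivity onto (0, ∞)
  have hex : ∀ b : ℝ, 0 < b → ∃ β : ℝ, 1 < β ∧ f β = b := by
    intro b hb
    set x0 : ℝ := min b 1 with hx0def
    have hx0 : 0 < x0 := lt_min hb one_pos
    have hx0b : x0 ≤ b := min_le_left _ _
    have hx0one : x0 ≤ 1 := min_le_right _ _
    have ht1 : 0 < Real.tanh 1 := my_tanh_pos one_pos
    set x1 : ℝ := b / Real.tanh 1 + 1 with hx1def
    have hx1 : 1 < x1 := by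
      rw [hx1def]
      have : 0 < b / Real.tanh 1 := div_pos hb ht1
      linarith
    set m0 : ℝ := Real.tanh x0 with hm0def
    set m1 : ℝ := Real.tanh x1 with hm1def
    have hm00 : 0 < m0 := my_tanh_pos hx0
    have hm01 : m0 < 1 := my_tanh_lt_one x0
    have hm11 : m1 < 1 := my_tanh_lt_one x1
    have hm0m1 : m0 < m1 := my_tanh_strictMono (lt_of_le_of_lt hx0one hx1)
    have hm10 : 0 < m1 := hm00.trans hm0m1
    have hH0 : m0 * atnh m0 < b := by
      rw [hm0def, atnh_tanh]
      calc Real.tanh x0 * x0 < 1 * x0 := by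
              exact mul_lt_mul_of_pos_right (my_tanh_lt_one x0) hx0
        _ = x0 := one_mul x0
        _ ≤ b := hx0b
    have hH1 : b < m1 * atnh m1 := by
      rw [hm1def, atnh_tanh]
      have h1 : Real.tanh 1 ≤ Real.tanh x1 := (my_tanh_strictMono hx1).le
      have h2 : Real.tanh 1 * x1 = b + Real.tanh 1 := by
        rw [hx1def]
        field_simp
      nlinarith
    have hcont : ContinuousOn (fun m : ℝ => m * atnh m) (Set.Icc m0 m1) := by
      apply ContinuousOn.mul continuousOn_id
      intro m hm
      obtain ⟨hml, hmr⟩ := hm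
      exact (hasDerivAt_atnh ⟨by linarith, by linarith⟩).continuousAt.continuousWithinAt
    have hmem : b ∈ Set.Icc (m0 * atnh m0) (m1 * atnh m1) := ⟨hH0.le, hH1.le⟩
    obtain ⟨m, hmIcc, hmeq⟩ := intermediate_value_Icc hm0m1.le hcont hmem
    obtain ⟨hml, hmr⟩ := hmIcc
    have hmpos : 0 < m := lt_of_lt_of_le hm00 hml
    have hmlt1 : m < 1 := lt_of_le_of_lt hmr hm11
    have hma : m < atnh m := lt_atnh hmpos hmlt1
    refine ⟨atnh m / m, (one_lt_div hmpos).2 hma, ?_⟩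
    have hdm : mB (atnh m / m) = m := by
      apply hdet _ _ ((one_lt_div hmpos).2 hma) hmpos hmlt1
      rw [div_mul_cancel₀ _ (ne_of_gt hmpos)]
    show (atnh m / m) * (mB (atnh m / m))^2 = b
    rw [hdm, ← hmeq]
    field_simp
  -- positivity of f on Ioi 1
  have hpos : ∀ β ∈ Set.Ioi (1:ℝ), 0 < f β := by
    intro β hβ
    simp only [Set.mem_Ioi] at hβ
    have := (hmB β hβ).1.1
    show 0 < β * (mB β)^2
    positivity
  -- image of f
  have himg : f '' (Set.Ioi 1) = Set.Ioi 0 := by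
    apply Set.Subset.antisymm
    · rintro y ⟨β, hβ, rfl⟩
      exact hpos β hβ
    · intro b hb
      obtain ⟨β, hβ, hfb⟩ := hex b hb
      exact ⟨β, hβ, hfb⟩
  -- continuity
  have hcont : ContinuousOn f (Set.Ioi 1) := by
    intro a ha
    refine (hsm.continuousAt_of_image_mem_nhds (isOpen_Ioi.mem_nhds ha) ?_).continuousWithinAt
    rw [himg]
    exact Ioi_mem_nhds (hpos a ha)
  refine ⟨hcont, hsm, ?_, ?_, ?_⟩
  · -- tendsto 0 at 1+
    rw [tendsto_order]
    constructor
    · intro a' ha'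
      filter_upwards [self_mem_nhdsWithin] with β hβ
      exact lt_trans ha' (hpos β hβ)
    · intro a' ha'
      obtain ⟨β0, hβ0, hfβ0⟩ := hex (a'/2) (by linarith)
      have hmem : Set.Ioo (1:ℝ) β0 ∈ nhdsWithin 1 (Set.Ioi 1) :=
        Ioo_mem_nhdsGT_of_mem ⟨le_refl 1, hβ0⟩
      filter_upwards [hmem] with β hβ
      obtain ⟨hβ1, hββ0⟩ := hβ
      have := hsm hβ1 hβ0 hββ0
      rw [hfβ0] at this
      linarith
  · -- tendsto atTop
    rw [tendsto_atTop]
    intro M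
    obtain ⟨β1, hβ1, hfβ1⟩ := hex (max M 1) (lt_max_iff.2 (Or.inr one_pos))
    rw [eventually_atTop]
    refine ⟨β1 + 1, fun β hβ => ?_⟩
    have hββ1 : β1 < β := by linarith
    have := hsm hβ1 (hβ1.trans hββ1) hββ1
    rw [hfβ1] at this
    exact le_trans (le_max_left M 1) this.le
  · -- existence and uniqueness
    intro b hb
    obtain ⟨β, hβ, hfb⟩ := hex b hb
    refine ⟨β, ⟨hβ, hfb⟩, ?_⟩
    rintro β' ⟨hβ', hfb'⟩
    exact hsm.injOn hβ' hβ (hfb'.trans hfb.symm)
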